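/- The fixed point h^ω(0) of the morphism h on {0,1,2,3,4} given by h(0)=0134, h(1)=2134, h(2)=3234, h(3)=2321, h(4)=3421 contains none of the 2-letter subwords 11, 14, 22, 24, 31, 33, 41, 44, 12, 43. -/

import Mathlib

/-- The morphism h on {0,1,2,3,4}: h(0)=0134, h(1)=2134, h(2)=3234, h(3)=2321, h(4)=3421. -/
def hm : Fin 5 → List (Fin 5) :=
  ![[0, 1, 3, 4], [2, 1, 3, 4], [3, 2, 3, 4], [2, 3, 2, 1], [3, 4, 2, 1]]

/-- The iterates hⁿ(0). -/
def hIter : ℕ → List (Fin 5)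
  | 0 => [0]
  | n + 1 => (hIter n).flatMap hm

/-- The fixed point h^ω(0): its n-th letter is the n-th letter of h^{n+1}(0). -/
def hOmega (n : ℕ) : Fin 5 := (hIter (n + 1)).getD n 0

/-- Pairs of adjacent letters that may occur in the fixed point. -/
def Good (a b : Fin 5) : Prop :=
  (a, b) ∈ ([(0, 1), (1, 3), (2, 1), (2, 3), (3, 2), (3, 4), (4, 2)] : List (Fin 5 × Fin 5))

instance (a b : Fin 5) : Decidable (Good a b) :=
  inferInstanceAs (Decidable ((a, b) ∈ _))

lemma chain_hm : ∀ a : Fin 5, List.Chain' Good (hm a) := by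
  intro a; fin_cases a <;> simp [List.Chain', hm, List.isChain_cons_cons, Good]

lemma good_link : ∀ a b : Fin 5, Good a b →
    ∀ x ∈ (hm a).getLast?, ∀ y ∈ (hm b).head?, Good x y := by decide

lemma head_bind (b : Fin 5) (l : List (Fin 5)) :
    ((b :: l).flatMap hm).head? = (hm b).head? := by
  fin_cases b <;> simp [hm, List.flatMap_cons]

lemma chain_bind : ∀ l : List (Fin 5), List.Chain' Good l →
    List.Chain' Good (l.flatMap hm)
  | [], _ => by simp [List.Chain']
  | [a], _ => by simpa [List.flatMap_cons] using chain_hm a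
  | a :: b :: l, h => by
    have hab : Good a b := (List.isChain_cons_cons.mp h).1
    have htail : List.Chain' Good (b :: l) := (List.isChain_cons_cons.mp h).2
    rw [show ((a :: b :: l).flatMap hm) = hm a ++ ((b :: l).flatMap hm) from rfl]
    refine List.IsChain.append (chain_hm a) (chain_bind (b :: l) htail) ?_
    intro x hx y hy
    rw [head_bind] at hy
    exact good_link a b hab x hx y hy

lemma chain_hIter : ∀ n, List.Chain' Good (hIter n)
  | 0 => by simp [hIter, List.Chain']
  | n + 1 => chain_bind _ (chain_hIter n)

lemma length_bind_hm (l : List (Fin 5)) : (l.flatMap hm).length = 4 * l.length := by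
  induction l with
  | nil => simp
  | cons a l ih =>
    rw [show ((a :: l).flatMap hm) = hm a ++ l.flatMap hm from rfl, List.length_append, ih]
    have : (hm a).length = 4 := by fin_cases a <;> rfl
    rw [this, List.length_cons]; ring

lemma length_hIter (n : ℕ) : (hIter n).length = 4 ^ n := by
  induction n with
  | zero => rfl
  | succ n ih => rw [hIter, length_bind_hm, ih, pow_succ]; ring

lemma hIter_prefix (n : ℕ) : ∃ t, hIter (n + 1) = hIter n ++ t := by
  induction n with
  | zero => exact ⟨[1, 3, 4], rfl⟩
  | succ n ih =>
    obtain ⟨t, ht⟩ := ih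
    exact ⟨t.flatMap hm, by
      rw [show hIter (n + 1 + 1) = (hIter (n + 1)).flatMap hm from rfl, ht,
        show (hIter n ++ t).flatMap hm = (hIter n).flatMap hm ++ t.flatMap hm from
          List.flatMap_append ..,
        show (hIter n).flatMap hm = hIter (n + 1) from rfl, ht]⟩

lemma lt_len (i n : ℕ) (h : i < n) : i < (hIter n).length := by
  rw [length_hIter]
  exact lt_of_lt_of_le h (Nat.le_of_lt (Nat.lt_pow_self (n := n) (a := 4) (by norm_num)))

lemma hOmega_eq (i : ℕ) : hOmega i = (hIter (i + 2)).getD i 0 := by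
  obtain ⟨t, ht⟩ := hIter_prefix (i + 1)
  rw [hOmega, show i + 1 + 1 = i + 2 from rfl] at *
  rw [ht, List.getD_append _ _ _ _ (lt_len i (i + 1) (by omega))]

lemma good_omega (i : ℕ) : Good (hOmega i) (hOmega (i + 1)) := by
  rw [hOmega_eq, hOmega, show i + 1 + 1 = i + 2 from rfl]
  have h1 : i + 1 < (hIter (i + 2)).length := lt_len _ _ (by omega)
  have h0 : i < (hIter (i + 2)).length := by omega
  rw [List.getD_eq_getElem _ _ h0, List.getD_eq_getElem _ _ h1]
  exact List.isChain_iff_getElem.mp (chain_hIter (i + 2)) i (by have := length_hIter (i+2); omega)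

lemma good_not_bad : ∀ a b : Fin 5, Good a b →
    ¬((a, b) = (1, 1) ∨ (a, b) = (1, 4) ∨ (a, b) = (2, 2) ∨ (a, b) = (2, 4) ∨
      (a, b) = (3, 1) ∨ (a, b) = (3, 3) ∨ (a, b) = (4, 1) ∨ (a, b) = (4, 4) ∨
      (a, b) = (1, 2) ∨ (a, b) = (4, 3)) := by decide

theorem no_bad_two_letter_subwords :
    ∀ i : ℕ, (hOmega i, hOmega (i + 1)) ∉
      ({(1, 1), (1, 4), (2, 2), (2, 4), (3, 1), (3, 3), (4, 1), (4, 4), (1, 2), (4, 3)} :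
        Set (Fin 5 × Fin 5)) := by
  intro i hmem
  simp only [Set.mem_insert_iff, Set.mem_singleton_iff] at hmem
  exact good_not_bad _ _ (good_omega i) hmem
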